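/- The intersection S of all nonempty closed u-saturated subsets of M is itself a nonempty closed u-saturated set; in particular there is a smallest nonempty closed u-saturated set, which is the unique minimal set of the partition 𝒰. (Theorem 1(1): the strong unstable foliation of a usu-accessible partially hyperbolic diffeomorphism has a unique minimal set.) -/

import Mathlib

private lemma iterate_image_lemma {M : Type*} [TopologicalSpace M] (f : M ≃ₜ M) (𝒰 : M → Set M)
    (h_inv : ∀ x : M, (⇑f) '' (𝒰 x) = 𝒰 (f x)) :
    ∀ (n : ℕ) (z : M), (⇑f)^[n] '' (𝒰 z) = 𝒰 ((⇑f)^[n] z) := by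
  intro n
  induction n with
  | zero => simp
  | succ n ih =>
    intro z
    rw [Function.iterate_succ', Set.image_comp, ih z, h_inv]; rfl

private lemma inter_nonempty_lemma
    {M : Type*} [MetricSpace M] [CompactSpace M]
    (f : M ≃ₜ M) (𝒰 : M → Set M)
    (h_self : ∀ x : M, x ∈ 𝒰 x)
    (h_part : ∀ x y : M, y ∈ 𝒰 x → 𝒰 y = 𝒰 x)
    (h_inv : ∀ x : M, (⇑f) '' (𝒰 x) = 𝒰 (f x))
    (K l : ℝ) (hl : 0 ≤ l) (hl1 : l < 1)
    (h_acc : ∀ x y : M, ∃ p q : M, p ∈ 𝒰 x ∧ y ∈ 𝒰 q ∧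
      ∀ n : ℕ, dist ((⇑f)^[n] p) ((⇑f)^[n] q) ≤ K * l ^ n)
    (A B : Set M) (hA : A.Nonempty) (hAc : IsClosed A) (hAs : ∀ x ∈ A, 𝒰 x ⊆ A)
    (hB : B.Nonempty) (hBc : IsClosed B) (hBs : ∀ x ∈ B, 𝒰 x ⊆ B) :
    (A ∩ B).Nonempty := by
  obtain ⟨x, hx⟩ := hA
  obtain ⟨y, hy⟩ := hB
  -- for each n, get points aₙ ∈ A, bₙ ∈ B with dist ≤ K l^n
  have key : ∀ n : ℕ, ∃ a b : M, a ∈ A ∧ b ∈ B ∧ dist a b ≤ K * l ^ n := by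
    intro n
    obtain ⟨p, q, hp, hq, hd⟩ := h_acc ((⇑f.symm)^[n] x) ((⇑f.symm)^[n] y)
    have hfix : ∀ z : M, (⇑f)^[n] ((⇑f.symm)^[n] z) = z := fun z =>
      (Function.LeftInverse.iterate f.apply_symm_apply n) z
    refine ⟨(⇑f)^[n] p, (⇑f)^[n] q, ?_, ?_, ?_⟩
    · have : (⇑f)^[n] p ∈ (⇑f)^[n] '' (𝒰 ((⇑f.symm)^[n] x)) := ⟨p, hp, rfl⟩
      rw [iterate_image_lemma f 𝒰 h_inv, hfix x] at this
      exact hAs x hx this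
    · have hq' : q ∈ 𝒰 ((⇑f.symm)^[n] y) := by
        rw [h_part q ((⇑f.symm)^[n] y) hq]; exact h_self q
      have : (⇑f)^[n] q ∈ (⇑f)^[n] '' (𝒰 ((⇑f.symm)^[n] y)) := ⟨q, hq', rfl⟩
      rw [iterate_image_lemma f 𝒰 h_inv, hfix y] at this
      exact hBs y hy this
    · exact hd n
  choose a b haA hbB hd using key
  -- extract convergent subsequence of a in compact A
  obtain ⟨z, hzA, φ, hφ, hconv⟩ := hAc.isCompact.tendsto_subseq haA
  -- b ∘ φ also converges to z
  have hl0 : Filter.Tendsto (fun n : ℕ => K * l ^ n) Filter.atTop (nhds 0) := by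
    rw [show (0:ℝ) = K * 0 by ring]
    exact (tendsto_pow_atTop_nhds_zero_of_lt_one hl hl1).const_mul K
  have hdist0 : Filter.Tendsto (fun k => dist (a (φ k)) (b (φ k))) Filter.atTop (nhds 0) := by
    refine squeeze_zero (fun k => dist_nonneg) (fun k => hd (φ k)) ?_
    exact hl0.comp hφ.tendsto_atTop
  have hbconv : Filter.Tendsto (fun k => b (φ k)) Filter.atTop (nhds z) := by
    rw [tendsto_iff_dist_tendsto_zero]
    refine squeeze_zero (fun k => dist_nonneg) (fun k => dist_triangle _ (a (φ k)) z) ?_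
    have : Filter.Tendsto (fun k => dist (b (φ k)) (a (φ k)) + dist (a (φ k)) z)
        Filter.atTop (nhds (0 + 0)) := by
      refine Filter.Tendsto.add ?_ ?_
      · simpa [dist_comm] using hdist0
      · exact (tendsto_iff_dist_tendsto_zero.mp hconv)
    simpa using this
  have hzB : z ∈ B := hBc.mem_of_tendsto hbconv (Filter.Eventually.of_forall fun k => hbB (φ k))
  exact ⟨z, hzA, hzB⟩

theorem stmt1_unique_minimal_set
    {M : Type*} [MetricSpace M] [CompactSpace M] [Nonempty M]
    (f : M ≃ₜ M) (𝒰 : M → Set M)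
    (h_self : ∀ x : M, x ∈ 𝒰 x)
    (h_part : ∀ x y : M, y ∈ 𝒰 x → 𝒰 y = 𝒰 x)
    (h_inv : ∀ x : M, (⇑f) '' (𝒰 x) = 𝒰 (f x))
    (K l : ℝ) (hK : 0 < K) (hl : 0 < l) (hl1 : l < 1)
    (h_acc : ∀ x y : M, ∃ p q : M, p ∈ 𝒰 x ∧ y ∈ 𝒰 q ∧
      ∀ n : ℕ, dist ((⇑f)^[n] p) ((⇑f)^[n] q) ≤ K * l ^ n)
    (S : Set M)
    (hS : S = ⋂₀ {A : Set M | A.Nonempty ∧ IsClosed A ∧ ∀ x ∈ A, 𝒰 x ⊆ A}) :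
    (S.Nonempty ∧ IsClosed S ∧ (∀ x ∈ S, 𝒰 x ⊆ S)) ∧
    (∀ A : Set M, A.Nonempty → IsClosed A → (∀ x ∈ A, 𝒰 x ⊆ A) → S ⊆ A) ∧
    (∀ Λ : Set M, Λ.Nonempty → IsClosed Λ → (∀ x ∈ Λ, 𝒰 x ⊆ Λ) →
      (∀ Λ' : Set M, Λ' ⊆ Λ → Λ'.Nonempty → IsClosed Λ' → (∀ x ∈ Λ', 𝒰 x ⊆ Λ') → Λ' = Λ) →
      Λ = S) := by
  set ℱ : Set (Set M) := {A : Set M | A.Nonempty ∧ IsClosed A ∧ ∀ x ∈ A, 𝒰 x ⊆ A} with hℱ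
  have inter_mem : ∀ A ∈ ℱ, ∀ B ∈ ℱ, A ∩ B ∈ ℱ := by
    rintro A ⟨hA, hAc, hAs⟩ B ⟨hB, hBc, hBs⟩
    refine ⟨inter_nonempty_lemma f 𝒰 h_self h_part h_inv K l hl.le hl1 h_acc
      A B hA hAc hAs hB hBc hBs, hAc.inter hBc, ?_⟩
    rintro x ⟨hxA, hxB⟩
    exact Set.subset_inter (hAs x hxA) (hBs x hxB)
  have huniv : (Set.univ : Set M) ∈ ℱ :=
    ⟨Set.univ_nonempty, isClosed_univ, fun _ _ => Set.subset_univ _⟩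
  have hne : Nonempty ℱ := ⟨⟨Set.univ, huniv⟩⟩
  -- S nonempty via directed compact intersection
  have hSne : S.Nonempty := by
    rw [hS, Set.sInter_eq_iInter]
    refine IsCompact.nonempty_iInter_of_directed_nonempty_isCompact_isClosed
      (fun A : ℱ => (A : Set M)) ?_ (fun A => A.2.1) (fun A => A.2.2.1.isCompact)
      (fun A => A.2.2.1)
    rintro ⟨A, hA⟩ ⟨B, hB⟩
    exact ⟨⟨A ∩ B, inter_mem A hA B hB⟩, Set.inter_subset_left, Set.inter_subset_right⟩
  have hScl : IsClosed S := by
    rw [hS]; exact isClosed_sInter fun A hA => hA.2.1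
  have hSsat : ∀ x ∈ S, 𝒰 x ⊆ S := by
    intro x hx y hy
    rw [hS] at hx ⊢
    intro A hA
    exact hA.2.2 x (hx A hA) hy
  have hSsub : ∀ A : Set M, A.Nonempty → IsClosed A → (∀ x ∈ A, 𝒰 x ⊆ A) → S ⊆ A := by
    intro A hA hAc hAs
    rw [hS]
    exact Set.sInter_subset_of_mem ⟨hA, hAc, hAs⟩
  refine ⟨⟨hSne, hScl, hSsat⟩, hSsub, ?_⟩
  intro Λ hΛ hΛc hΛs hmin
  exact (hmin S (hSsub Λ hΛ hΛc hΛs) hSne hScl hSsat).symm
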